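/- For every k ≥ 2 and every d ≥ 2, the seed #^{d-r} - #^r with r = [d/3] (the nearest integer to d/3) has the minimal k-critical length among all seeds of the form #^{d-r'} - #^{r'} of weight d with exactly one joker. -/
import Mathlib


/-- Number of zeros of word `w` among positions `0 .. m-1`. -/
def zerosIn (m : ℕ) (w : ℕ → Bool) : ℕ :=
  ((Finset.range m).filter (fun j => w j = false)).card

/-- Seed `Q` matches word `w` of length `m` at position `i`. -/
def MatchesAt (Q : Finset ℕ) (m : ℕ) (w : ℕ → Bool) (i : ℕ) : Prop :=
  ∀ p ∈ Q, i + p < m ∧ w (i + p) = true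

/-- Seed `Q` detects word `w` of length `m`. -/
def Detects (Q : Finset ℕ) (m : ℕ) (w : ℕ → Bool) : Prop :=
  ∃ i, MatchesAt Q m w i

/-- Seed `Q` solves the linear `(m,k)`-problem. -/
def Solves (Q : Finset ℕ) (m k : ℕ) : Prop :=
  ∀ w : ℕ → Bool, zerosIn m w ≤ k → Detects Q m w

/-- A family of seeds solves the linear `(m,k)`-problem. -/
def FSolves (F : Set (Finset ℕ)) (m k : ℕ) : Prop :=
  ∀ w : ℕ → Bool, zerosIn m w ≤ k → ∃ Q ∈ F, Detects Q m w

/-- Seed `Q` solves the cyclic `(m,k)`-problem. -/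
def CSolves (Q : Finset ℕ) (m k : ℕ) : Prop :=
  ∀ w : ℕ → Bool, zerosIn m w ≤ k →
    ∃ j < m, ∀ p ∈ Q, w ((j + p) % m) = true

/-- The seed `#^p - #^q` : matching positions `0..p-1` and `p+1..p+q`. -/
def Qpq (p q : ℕ) : Finset ℕ := Finset.range p ∪ Finset.Icc (p+1) (p+q)

/-- The `k`-critical length of a seed: least `m` such that it solves the `(m,k)`-problem. -/
noncomputable def critLen (Q : Finset ℕ) (k : ℕ) : ℕ := sInf {m | Solves Q m k}

def gfun (p q : ℕ) : ℕ → ℕ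
  | 0 => 0
  | 1 => p
  | (j+2) => gfun p q j + (p + 2*q + 1)

lemma gfun_two_step (p q j : ℕ) : gfun p q (j+2) = gfun p q j + (p + 2*q + 1) := rfl

lemma gfun_step {p q : ℕ} (hp1 : p ≤ 2*q+1) : ∀ j, gfun p q j + p ≤ gfun p q (j+1) := by
  intro j
  induction j using Nat.twoStepInduction with
  | zero => simp [gfun]
  | one => show p + p ≤ gfun p q 0 + (p + 2*q+1); simp [gfun]; omega
  | more n ih _ =>
    rw [gfun_two_step, show n+2+1 = (n+1)+2 from rfl, gfun_two_step]
    omega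

lemma gfun_mono {p q : ℕ} (hp1 : p ≤ 2*q+1) : Monotone (gfun p q) :=
  monotone_nat_of_le_succ fun j => le_trans (Nat.le_add_right _ p) (gfun_step hp1 j)

lemma gfun_superadd {p q : ℕ} (hp1 : p ≤ 2*q+1) :
    ∀ a b, gfun p q a + gfun p q b ≤ gfun p q (a+b) := by
  intro a b
  induction b using Nat.twoStepInduction with
  | zero => simp [gfun]
  | one => exact gfun_step hp1 a
  | more n ih _ =>
    rw [gfun_two_step, show a + (n+2) = (a+n)+2 from by omega, gfun_two_step]
    omega

lemma gfun_bound1 {p q : ℕ} (hp1 : p ≤ 2*q+1) :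
    ∀ t, (t+1)*p + (2*q+1) ≤ gfun p q (t+2) := by
  intro t
  induction t with
  | zero => simp [gfun_two_step, gfun]; omega
  | succ n ih =>
    rw [show n+1+2 = (n+2)+1 from rfl]
    have h1 := gfun_step hp1 (n+2)
    have h2 : (n+1+1)*p = (n+1)*p + p := by ring
    omega

lemma gfun_ge_mul {p q : ℕ} (hp1 : p ≤ 2*q+1) : ∀ t, t * p ≤ gfun p q t := by
  intro t
  induction t with
  | zero => simp [gfun]
  | succ n ih =>
    have h1 := gfun_step hp1 n
    have h2 : (n+1)*p = n*p + p := by ring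
    omega

lemma gfun_le_mul {p q : ℕ} (h2q : 2*q ≤ p + 1) : ∀ t, gfun p q t ≤ t * (p+1) := by
  intro t
  induction t using Nat.twoStepInduction with
  | zero => simp [gfun]
  | one => simp [gfun]
  | more n ih _ =>
    rw [gfun_two_step]
    have h2 : (n+2)*(p+1) = n*(p+1) + 2*(p+1) := by ring
    omega

lemma gfun_even (p q : ℕ) : ∀ t, gfun p q (2*t) = t * (p+2*q+1) := by
  intro t
  induction t with
  | zero => simp [gfun]
  | succ n ih =>
    have h : 2*(n+1) = 2*n+2 := by ring
    rw [h, gfun_two_step, ih]; ring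

lemma gfun_odd (p q : ℕ) : ∀ t, gfun p q (2*t+1) = t * (p+2*q+1) + p := by
  intro t
  induction t with
  | zero => simp [gfun]
  | succ n ih =>
    have h : 2*(n+1)+1 = (2*n+1)+2 := by ring
    rw [h, gfun_two_step, ih]; ring

lemma cover_bound {p q : ℕ} (hq : 1 ≤ q) (hqp : q ≤ p) (hp1 : p ≤ 2*q+1) :
    ∀ J : ℕ, ∀ Z : Finset ℕ, Z.card ≤ J → ∀ s e : ℕ, s ≤ e →
      (∀ i, s ≤ i → i ≤ e → ∃ z ∈ Z, i ≤ z ∧ z ≤ i + (p+q) ∧ z ≠ i + p) →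
      e + 1 ≤ s + gfun p q J := by
  intro J
  induction J using Nat.strong_induction_on with
  | _ J IH =>
  intro Z hZ s e hse hcov
  obtain ⟨z0, hz0Z, -⟩ := hcov s le_rfl hse
  have hne : Z.Nonempty := ⟨z0, hz0Z⟩
  set z1 := Z.max' hne with hz1def
  have hz1Z : z1 ∈ Z := Z.max'_mem hne
  have hmax : ∀ y ∈ Z, y ≤ z1 := fun y hy => Z.le_max' y hy
  obtain ⟨ζ, hζZ, hζ1, hζ2, hζ3⟩ := hcov e hse le_rfl
  have hez1 : e ≤ z1 := le_trans hζ1 (hmax ζ hζZ)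
  have hJ1 : 1 ≤ J := by
    have := Finset.card_pos.mpr hne; omega
  have hg1J : p ≤ gfun p q J := by
    have := gfun_mono hp1 hJ1; simpa [gfun] using this
  by_cases hb : z1 < s + p
  · omega
  · by_cases ha : e + p < z1
    · -- hole of z1 above range: peel z1
      set Z' := Z.erase z1 with hZ'def
      have hZ'card : Z'.card ≤ J - 1 := by
        rw [hZ'def, Finset.card_erase_of_mem hz1Z]; omega
      by_cases hsd : z1 ≤ s + (p+q)
      · omega
      · have hmono' : gfun p q (J-1) ≤ gfun p q J := gfun_mono hp1 (by omega)
        have hstep' := gfun_step hp1 (J-1)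
        have hJ1' : J - 1 + 1 = J := by omega
        rw [hJ1'] at hstep'
        by_cases hee : e + (p+q) < z1
        · have hcov' : ∀ i, s ≤ i → i ≤ e → ∃ z ∈ Z', i ≤ z ∧ z ≤ i + (p+q) ∧ z ≠ i + p := by
            intro i hi1 hi2
            obtain ⟨z, hzZ, h1, h2, h3⟩ := hcov i hi1 hi2
            exact ⟨z, Finset.mem_erase.mpr ⟨by omega, hzZ⟩, h1, h2, h3⟩
          have := IH (J-1) (by omega) Z' hZ'card s e hse hcov'
          omega
        · set e' := z1 - (p+q) - 1 with he'def
          have hse' : s ≤ e' := by omega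
          have hcov' : ∀ i, s ≤ i → i ≤ e' → ∃ z ∈ Z', i ≤ z ∧ z ≤ i + (p+q) ∧ z ≠ i + p := by
            intro i hi1 hi2
            obtain ⟨z, hzZ, h1, h2, h3⟩ := hcov i hi1 (by omega)
            exact ⟨z, Finset.mem_erase.mpr ⟨by omega, hzZ⟩, h1, h2, h3⟩
          have := IH (J-1) (by omega) Z' hZ'card s e' hse' hcov'
          omega
    · -- chain case
      have hc1 : s + p ≤ z1 := by omega
      have hc2 : z1 ≤ e + p := by omega
      have inner : ∀ z, z ∈ Z → ∀ t : ℕ,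
          (∀ y ∈ Z, z < y → z + q < y) → z ≤ e + p → e ≤ z + t * p →
          t ≤ (Z.filter (fun y => z < y)).card → e + 1 ≤ s + gfun p q J := by
        intro z
        induction z using Nat.strong_induction_on with
        | _ z IHz =>
        intro hzZ t habove hzle hele ht
        have htJ : t + 1 ≤ J := by
          have h1 : (Z.filter (fun y => z < y)).card < Z.card := by
            apply Finset.card_lt_card
            constructor
            · exact Finset.filter_subset _ _
            · intro hsub
              have := hsub hzZ
              simp at this
          omega
        by_cases hbot : z < s + p
        · have h1 : (t+1) * p ≤ gfun p q (t+1) := gfun_ge_mul hp1 (t+1)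
          have h2 : gfun p q (t+1) ≤ gfun p q J := gfun_mono hp1 htJ
          have h3 : (t+1)*p = t*p + p := by ring
          omega
        · push_neg at hbot
          obtain ⟨y, hyZ, hy1, hy2, hy3⟩ := hcov (z - p) (by omega) (by omega)
          have hyz : y ≠ z := by omega
          have hylt : y < z := by
            rcases lt_or_gt_of_ne hyz with h | h
            · exact h
            · exact absurd (habove y hyZ h) (by omega)
          have hZbne : (Z.filter (fun w => w < z)).Nonempty :=
            ⟨y, Finset.mem_filter.mpr ⟨hyZ, hylt⟩⟩
          set z' := (Z.filter (fun w => w < z)).max' hZbne with hz'def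
          have hz'mem : z' ∈ Z.filter (fun w => w < z) := Finset.max'_mem _ hZbne
          have hz'Z : z' ∈ Z := (Finset.mem_filter.mp hz'mem).1
          have hz'lt : z' < z := by
            have := (Finset.mem_filter.mp hz'mem).2; simpa using this
          have hyz' : y ≤ z' := by
            rw [hz'def]
            exact Finset.le_max' (Z.filter (fun w => w < z)) y (Finset.mem_filter.mpr ⟨hyZ, hylt⟩)
          have hzz'p : z ≤ z' + p := by omega
          have hmaxbelow : ∀ w ∈ Z, w < z → w ≤ z' := by
            intro w hw hlt
            rw [hz'def]
            exact Finset.le_max' (Z.filter (fun w => w < z)) w (Finset.mem_filter.mpr ⟨hw, hlt⟩)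
          by_cases hclose : z ≤ z' + q
          · -- closure
            have hz_nf : z ∉ Z.filter (fun y => z < y) := by simp
            have hz'_nf : z' ∉ insert z (Z.filter (fun y => z < y)) := by
              simp only [Finset.mem_insert, Finset.mem_filter, not_or, not_and]
              exact ⟨by omega, fun _ => by omega⟩
            have hsub : insert z' (insert z (Z.filter (fun y => z < y))) ⊆
                Z.filter (fun w => z' ≤ w) := by
              intro w hw
              simp only [Finset.mem_insert, Finset.mem_filter] at hw ⊢
              rcases hw with rfl | rfl | ⟨hw1, hw2⟩
              · exact ⟨hz'Z, le_rfl⟩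
              · exact ⟨hzZ, by omega⟩
              · exact ⟨hw1, by omega⟩
            have hcount : t + 2 ≤ (Z.filter (fun w => z' ≤ w)).card := by
              have h1 := Finset.card_le_card hsub
              rw [Finset.card_insert_of_notMem hz'_nf, Finset.card_insert_of_notMem hz_nf] at h1
              omega
            have hcards := Finset.card_filter_add_card_filter_not
              (s := Z) (p := fun w => z' ≤ w)
            set Zlow := Z.filter (fun w => ¬ z' ≤ w) with hZlowdef
            have hJt : t + 2 ≤ J := by
              have := Finset.card_le_card (Finset.filter_subset (fun w => z' ≤ w) Z)
              omega
            have hZlowcard : Zlow.card ≤ J - (t+2) := by omega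
            have hb1 : (t+1)*p + (2*q+1) ≤ gfun p q (t+2) := gfun_bound1 hp1 t
            have hmul : (t+1)*p = t*p + p := by ring
            have hmono2 : gfun p q (t+2) ≤ gfun p q J := gfun_mono hp1 hJt
            by_cases hsd : z' ≤ s + (p+q)
            · omega
            · have hmono3 : gfun p q (J - (t+2)) ≤ gfun p q J := gfun_mono hp1 (by omega)
              have hsup : gfun p q (J - (t+2)) + gfun p q (t+2) ≤ gfun p q J := by
                have h := gfun_superadd hp1 (J - (t+2)) (t+2)
                rwa [Nat.sub_add_cancel hJt] at h
              by_cases hee : e + (p+q) < z'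
              · have hcov' : ∀ i, s ≤ i → i ≤ e → ∃ zz ∈ Zlow, i ≤ zz ∧ zz ≤ i + (p+q) ∧ zz ≠ i + p := by
                  intro i hi1 hi2
                  obtain ⟨zz, hzzZ, h1, h2, h3⟩ := hcov i hi1 hi2
                  exact ⟨zz, Finset.mem_filter.mpr ⟨hzzZ, by omega⟩, h1, h2, h3⟩
                have := IH (J - (t+2)) (by omega) Zlow hZlowcard s e hse hcov'
                omega
              · set e2 := z' - (p+q) - 1 with he2def
                have hse2 : s ≤ e2 := by omega
                have hcov' : ∀ i, s ≤ i → i ≤ e2 → ∃ zz ∈ Zlow, i ≤ zz ∧ zz ≤ i + (p+q) ∧ zz ≠ i + p := by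
                  intro i hi1 hi2
                  obtain ⟨zz, hzzZ, h1, h2, h3⟩ := hcov i hi1 (by omega)
                  exact ⟨zz, Finset.mem_filter.mpr ⟨hzzZ, by omega⟩, h1, h2, h3⟩
                have := IH (J - (t+2)) (by omega) Zlow hZlowcard s e2 hse2 hcov'
                omega
          · -- chain step
            push_neg at hclose
            apply IHz z' hz'lt hz'Z (t+1)
            · intro w hw hlt
              rcases lt_trichotomy w z with h | h | h
              · exact absurd (hmaxbelow w hw h) (by omega)
              · omega
              · have := habove w hw h; omega
            · omega
            · have h3 : (t+1)*p = t*p + p := by ring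
              omega
            · have hz_nf : z ∉ Z.filter (fun y => z < y) := by simp
              have hsub : insert z (Z.filter (fun y => z < y)) ⊆
                  Z.filter (fun y => z' < y) := by
                intro w hw
                simp only [Finset.mem_insert, Finset.mem_filter] at hw ⊢
                rcases hw with rfl | ⟨hw1, hw2⟩
                · exact ⟨hzZ, hz'lt⟩
                · exact ⟨hw1, by omega⟩
              have h1 := Finset.card_le_card hsub
              rw [Finset.card_insert_of_notMem hz_nf] at h1
              omega
      exact inner z1 hz1Z 0
        (fun y hy hlt => absurd (hmax y hy) (by omega))
        hc2 (by omega) (Nat.zero_le _)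

lemma mem_Qpq {a b x : ℕ} : x ∈ Qpq a b ↔ (x < a ∨ (a + 1 ≤ x ∧ x ≤ a + b)) := by
  simp [Qpq, Finset.mem_union, Finset.mem_range, Finset.mem_Icc]


lemma solves_upper {p q k : ℕ} (hq : 1 ≤ q) (hqp : q ≤ p) (hp1 : p ≤ 2*q+1) :
    Solves (Qpq p q) ((p+q) + 1 + gfun p q k) k := by
  intro w hw
  set m := (p+q) + 1 + gfun p q k with hm
  by_contra hnd
  have hcov : ∀ i, 0 ≤ i → i ≤ m - (p+q) - 1 →
      ∃ z ∈ (Finset.range m).filter (fun j => w j = false),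
        i ≤ z ∧ z ≤ i + (p+q) ∧ z ≠ i + p := by
    intro i _ hi
    have hnm : ¬ MatchesAt (Qpq p q) m w i := fun h => hnd ⟨i, h⟩
    rw [MatchesAt] at hnm
    push_neg at hnm
    obtain ⟨x, hxQ, hx⟩ := hnm
    rw [mem_Qpq] at hxQ
    have hxd : x ≤ p + q := by omega
    have hxm : i + x < m := by omega
    have hwf : w (i + x) = false := by
      rcases hx hxm with h
      revert h; cases w (i + x) <;> simp
    exact ⟨i + x, Finset.mem_filter.mpr ⟨Finset.mem_range.mpr hxm, hwf⟩,
      by omega, by omega, by omega⟩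
  have := cover_bound hq hqp hp1 k _ hw 0 (m - (p+q) - 1) (by omega) hcov
  omega

lemma solves_pigeon {p' q' k : ℕ} (hp' : 1 ≤ p') :
    Solves (Qpq p' q') ((k+1) * ((p'+q')+1)) k := by
  intro w hw
  set d := p' + q' with hd
  set m := (k+1) * (d+1) with hm
  by_contra hnd
  have hblock : ∀ j : Fin (k+1), ∃ x, x ≤ d ∧ w ((j : ℕ)*(d+1) + x) = false := by
    intro j
    by_contra hall
    push_neg at hall
    apply hnd
    refine ⟨(j : ℕ)*(d+1), fun x hx => ?_⟩
    rw [mem_Qpq] at hx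
    have hxd : x ≤ d := by omega
    have hlt : (j : ℕ)*(d+1) + x < m := by
      have h1 : ((j : ℕ)+1)*(d+1) ≤ (k+1)*(d+1) :=
        Nat.mul_le_mul_right _ (by have := j.isLt; omega)
      have h2 : ((j : ℕ)+1)*(d+1) = (j : ℕ)*(d+1) + (d+1) := by ring
      omega
    refine ⟨hlt, ?_⟩
    have := hall x hxd
    revert this; cases w ((j : ℕ)*(d+1) + x) <;> simp
  choose f hf1 hf2 using hblock
  have hinj : Function.Injective (fun j : Fin (k+1) => (j : ℕ)*(d+1) + f j) := by
    intro a b hab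
    by_contra hne
    have hne' : (a : ℕ) ≠ (b : ℕ) := fun h => hne (Fin.ext h)
    rcases Nat.lt_or_ge (a : ℕ) (b : ℕ) with h | h
    · have h1 : ((a : ℕ)+1)*(d+1) ≤ (b : ℕ)*(d+1) := Nat.mul_le_mul_right _ (by omega)
      have h2 : ((a : ℕ)+1)*(d+1) = (a : ℕ)*(d+1) + (d+1) := by ring
      have := hf1 a; have := hf1 b
      simp only at hab
      omega
    · have h : (b : ℕ) < (a : ℕ) := by omega
      have h1 : ((b : ℕ)+1)*(d+1) ≤ (a : ℕ)*(d+1) := Nat.mul_le_mul_right _ (by omega)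
      have h2 : ((b : ℕ)+1)*(d+1) = (b : ℕ)*(d+1) + (d+1) := by ring
      have := hf1 a; have := hf1 b
      simp only at hab
      omega
  have hmem : ∀ j : Fin (k+1),
      (fun j : Fin (k+1) => (j : ℕ)*(d+1) + f j) j ∈
        (Finset.range m).filter (fun j => w j = false) := by
    intro j
    simp only []
    refine Finset.mem_filter.mpr ⟨Finset.mem_range.mpr ?_, hf2 j⟩
    show (j : ℕ)*(d+1) + f j < m
    have h1 : ((j : ℕ)+1)*(d+1) ≤ (k+1)*(d+1) :=
      Nat.mul_le_mul_right _ (by have := j.isLt; omega)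
    have h2 : ((j : ℕ)+1)*(d+1) = (j : ℕ)*(d+1) + (d+1) := by ring
    have := hf1 j
    omega
  have hcard := Finset.card_le_card_of_injOn
    (s := (Finset.univ : Finset (Fin (k+1))))
    (t := (Finset.range m).filter (fun j => w j = false))
    (fun j : Fin (k+1) => (j : ℕ)*(d+1) + f j)
    (fun j _ => hmem j) (Function.Injective.injOn hinj)
  rw [Finset.card_univ] at hcard
  simp only [Fintype.card_fin] at hcard
  have : zerosIn m w = ((Finset.range m).filter (fun j => w j = false)).card := rfl
  omega

lemma lower_construct {p q p' q' k : ℕ} (hq : 1 ≤ q) (hqp : q ≤ p) (hp1 : p ≤ 2*q+1)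
    (h2q : 2*q ≤ p+1) (hp' : 1 ≤ p') (hq' : 1 ≤ q') (hsum : p' + q' = p + q) (hk : 2 ≤ k) :
    ∃ Z : Finset ℕ, Z.card ≤ k ∧
      ∀ i, i < gfun p q k → ∃ z ∈ Z, i ≤ z ∧ z ≤ i + (p+q) ∧ z ≠ i + p' := by
  by_cases hA : q ≤ q' ∧ q ≤ p'
  · obtain ⟨hqq', hqp'⟩ := hA
    set D := p + 2*q + 1 with hD
    have hDpos : 0 < D := by omega
    rcases Nat.even_or_odd k with hev | hod
    · -- k = 2t : t pairs
      obtain ⟨t, ht⟩ := hev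
      have hkt : k = 2*t := by omega
      refine ⟨((Finset.range t).image fun b => D*b + (p+q)) ∪
              ((Finset.range t).image fun b => D*b + (p+q) + q), ?_, ?_⟩
      · calc _ ≤ ((Finset.range t).image fun b => D*b + (p+q)).card +
              ((Finset.range t).image fun b => D*b + (p+q) + q).card := Finset.card_union_le _ _
          _ ≤ t + t := by
              gcongr <;> exact le_trans (Finset.card_image_le) (le_of_eq (Finset.card_range t))
          _ ≤ k := by omega
      · intro i hi
        have hG : gfun p q k = t * D := by rw [hkt]; exact gfun_even p q t
        have hdm := Nat.div_add_mod i D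
        set b := i / D with hbdef
        set ρ := i % D with hρdef
        have hρlt : ρ < D := Nat.mod_lt _ hDpos
        have hbt : b < t := by
          by_contra hle; push_neg at hle
          have h1 : D * t ≤ D * b := Nat.mul_le_mul_left D hle
          have h2 : t * D = D * t := Nat.mul_comm t D
          omega
        by_cases h1 : ρ = q'
        · exact ⟨D*b + (p+q) + q, Finset.mem_union_right _
            (Finset.mem_image.mpr ⟨b, Finset.mem_range.mpr hbt, rfl⟩),
            by omega, by omega, by omega⟩
        · by_cases h2 : ρ ≤ p + q
          · exact ⟨D*b + (p+q), Finset.mem_union_left _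
              (Finset.mem_image.mpr ⟨b, Finset.mem_range.mpr hbt, rfl⟩),
              by omega, by omega, by omega⟩
          · exact ⟨D*b + (p+q) + q, Finset.mem_union_right _
              (Finset.mem_image.mpr ⟨b, Finset.mem_range.mpr hbt, rfl⟩),
              by omega, by omega, by omega⟩
    · -- k = 2t+1 : (t-1) pairs + triple
      obtain ⟨t, ht⟩ := hod
      have htpos : 1 ≤ t := by omega
      set t' := t - 1 with ht'
      have htt : t = t' + 1 := by omega
      refine ⟨(((Finset.range t').image fun b => D*b + (p+q)) ∪
              ((Finset.range t').image fun b => D*b + (p+q) + q)) ∪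
              {D*t' + (p+q), D*t' + (p+q) + q', D*t' + 2*(p+q)}, ?_, ?_⟩
      · have hc3 : ({D*t' + (p+q), D*t' + (p+q) + q', D*t' + 2*(p+q)} : Finset ℕ).card ≤ 3 := by
          have h1 := Finset.card_insert_le (D*t' + (p+q))
            ({D*t' + (p+q) + q', D*t' + 2*(p+q)} : Finset ℕ)
          have h2 := Finset.card_insert_le (D*t' + (p+q) + q')
            ({D*t' + 2*(p+q)} : Finset ℕ)
          simp only [Finset.card_singleton] at h1 h2
          omega
        calc _ ≤ (((Finset.range t').image fun b => D*b + (p+q)) ∪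
              ((Finset.range t').image fun b => D*b + (p+q) + q)).card +
              ({D*t' + (p+q), D*t' + (p+q) + q', D*t' + 2*(p+q)} : Finset ℕ).card :=
                Finset.card_union_le _ _
          _ ≤ (t' + t') + 3 := by
              gcongr
              calc _ ≤ ((Finset.range t').image fun b => D*b + (p+q)).card +
                  ((Finset.range t').image fun b => D*b + (p+q) + q).card :=
                    Finset.card_union_le _ _
                _ ≤ t' + t' := by
                    gcongr <;> exact le_trans (Finset.card_image_le) (le_of_eq (Finset.card_range t'))
          _ ≤ k := by omega
      · intro i hi
        have hG : gfun p q k = t * D + p := by rw [ht]; exact gfun_odd p q t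
        have hDt : t * D = D * t' + D := by rw [htt]; ring
        by_cases hiB : i < D * t'
        · -- pair region
          have hdm := Nat.div_add_mod i D
          set b := i / D with hbdef
          set ρ := i % D with hρdef
          have hρlt : ρ < D := Nat.mod_lt _ hDpos
          have hbt : b < t' := by
            by_contra hle; push_neg at hle
            have h1 : D * t' ≤ D * b := Nat.mul_le_mul_left D hle
            omega
          by_cases h1 : ρ = q'
          · exact ⟨D*b + (p+q) + q, Finset.mem_union_left _ (Finset.mem_union_right _
              (Finset.mem_image.mpr ⟨b, Finset.mem_range.mpr hbt, rfl⟩)),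
              by omega, by omega, by omega⟩
          · by_cases h2 : ρ ≤ p + q
            · exact ⟨D*b + (p+q), Finset.mem_union_left _ (Finset.mem_union_left _
                (Finset.mem_image.mpr ⟨b, Finset.mem_range.mpr hbt, rfl⟩)),
                by omega, by omega, by omega⟩
            · exact ⟨D*b + (p+q) + q, Finset.mem_union_left _ (Finset.mem_union_right _
                (Finset.mem_image.mpr ⟨b, Finset.mem_range.mpr hbt, rfl⟩)),
                by omega, by omega, by omega⟩
        · -- triple region
          push_neg at hiB
          have hm1 : D*t' + (p+q) ∈ (((Finset.range t').image fun b => D*b + (p+q)) ∪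
              ((Finset.range t').image fun b => D*b + (p+q) + q)) ∪
              ({D*t' + (p+q), D*t' + (p+q) + q', D*t' + 2*(p+q)} : Finset ℕ) :=
            Finset.mem_union_right _ (by simp)
          have hm2 : D*t' + (p+q) + q' ∈ (((Finset.range t').image fun b => D*b + (p+q)) ∪
              ((Finset.range t').image fun b => D*b + (p+q) + q)) ∪
              ({D*t' + (p+q), D*t' + (p+q) + q', D*t' + 2*(p+q)} : Finset ℕ) :=
            Finset.mem_union_right _ (by simp)
          have hm3 : D*t' + 2*(p+q) ∈ (((Finset.range t').image fun b => D*b + (p+q)) ∪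
              ((Finset.range t').image fun b => D*b + (p+q) + q)) ∪
              ({D*t' + (p+q), D*t' + (p+q) + q', D*t' + 2*(p+q)} : Finset ℕ) :=
            Finset.mem_union_right _ (by simp)
          by_cases h1 : i = D*t' + q'
          · exact ⟨D*t' + (p+q) + q', hm2, by omega, by omega, by omega⟩
          · by_cases h2 : i = D*t' + (p+q) + q'
            · exact ⟨D*t' + (p+q) + q', hm2, by omega, by omega, by omega⟩
            · by_cases h3 : i ≤ D*t' + (p+q)
              · exact ⟨D*t' + (p+q), hm1, by omega, by omega, by omega⟩
              · exact ⟨D*t' + 2*(p+q), hm3, by omega, by omega, by omega⟩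
  · push_neg at hA
    by_cases hB : q' < q
    · -- left chain with step p' ≥ p+1
      have hpp' : p + 1 ≤ p' := by omega
      refine ⟨(Finset.range k).image fun b => p'*b + (p' - 1), ?_, ?_⟩
      · exact le_trans (Finset.card_image_le) (le_of_eq (Finset.card_range k))
      · intro i hi
        have hgle : gfun p q k ≤ k * (p+1) := gfun_le_mul h2q k
        have hkp : k * (p+1) ≤ k * p' := Nat.mul_le_mul_left k hpp'
        have hdm := Nat.div_add_mod i p'
        set b := i / p' with hbdef
        set ρ := i % p' with hρdef
        have hρlt : ρ < p' := Nat.mod_lt _ (by omega)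
        have hbt : b < k := by
          by_contra hle; push_neg at hle
          have h1 : p' * k ≤ p' * b := Nat.mul_le_mul_left p' hle
          have h2 : k * p' = p' * k := Nat.mul_comm k p'
          omega
        exact ⟨p'*b + (p' - 1),
          Finset.mem_image.mpr ⟨b, Finset.mem_range.mpr hbt, rfl⟩,
          by omega, by omega, by omega⟩
    · -- right chain with step q' ≥ p+1
      have hqB : q ≤ q' := by omega
      have hp'q : p' < q := by
        rcases hA hqB with h
        omega
      have hpq' : p + 1 ≤ q' := by omega
      set G := gfun p q k with hG
      have hGpos : 1 ≤ G := by
        have h1 := gfun_ge_mul hp1 k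
        have h2 : 1*1 ≤ k*p := Nat.mul_le_mul (by omega) (by omega)
        omega
      refine ⟨(Finset.range k).image fun b => (G - 1) + p' + 1 - q'*b, ?_, ?_⟩
      · exact le_trans (Finset.card_image_le) (le_of_eq (Finset.card_range k))
      · intro i hi
        have hgle : G ≤ k * (p+1) := gfun_le_mul h2q k
        have hkp : k * (p+1) ≤ k * q' := Nat.mul_le_mul_left k hpq'
        have hdm := Nat.div_add_mod (G - 1 - i) q'
        set b := (G - 1 - i) / q' with hbdef
        set ρ := (G - 1 - i) % q' with hρdef
        have hρlt : ρ < q' := Nat.mod_lt _ (by omega)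
        have hbt : b < k := by
          by_contra hle; push_neg at hle
          have h1 : q' * k ≤ q' * b := Nat.mul_le_mul_left q' hle
          have h2 : k * q' = q' * k := Nat.mul_comm k q'
          omega
        exact ⟨(G - 1) + p' + 1 - q'*b,
          Finset.mem_image.mpr ⟨b, Finset.mem_range.mpr hbt, rfl⟩,
          by omega, by omega, by omega⟩

/-- for `k ≥ 2` and `d ≥ 2`, the seed `#^{d-r} - #^r` with `r = [d/3]`
(nearest integer to `d/3`, i.e. `(2d+3)/6` with integer division) has minimal
`k`-critical length among all one-joker seeds `#^{d-r'} - #^{r'}` of weight `d`. -/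
theorem stmt6 (d k : ℕ) (hd : 2 ≤ d) (hk : 2 ≤ k) :
    ∀ r' : ℕ, 1 ≤ r' → r' ≤ d - 1 →
      critLen (Qpq (d - (2*d+3)/6) ((2*d+3)/6)) k ≤ critLen (Qpq (d - r') r') k := by
  intro r' hr1 hr2
  set q := (2*d+3)/6 with hqdef
  set p := d - q with hpdef
  have hq : 1 ≤ q := by omega
  have hqp : q ≤ p := by omega
  have hp1 : p ≤ 2*q+1 := by omega
  have h2q : 2*q ≤ p+1 := by omega
  have hpq : p + q = d := by omega
  set p' := d - r' with hp'def
  set q' := r' with hq'def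
  have hp'1 : 1 ≤ p' := by omega
  have hq'1 : 1 ≤ q' := by omega
  have hsum : p' + q' = p + q := by omega
  set L := (p+q) + 1 + gfun p q k with hL
  have h1 : critLen (Qpq p q) k ≤ L :=
    Nat.sInf_le (show L ∈ {m | Solves (Qpq p q) m k} from solves_upper hq hqp hp1)
  have hne' : {m | Solves (Qpq p' q') m k}.Nonempty :=
    ⟨(k+1) * ((p'+q')+1), solves_pigeon hp'1⟩
  have hmem := Nat.sInf_mem hne'
  have key : ∀ m, Solves (Qpq p' q') m k → L ≤ m := by
    intro m hs
    by_contra hlt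
    push_neg at hlt
    obtain ⟨Z, hZc, hZcov⟩ := lower_construct hq hqp hp1 h2q hp'1 hq'1 hsum hk
    set w : ℕ → Bool := fun j => decide (j ∉ Z) with hw
    have hz : zerosIn m w ≤ k := by
      refine le_trans (Finset.card_le_card ?_) hZc
      intro j hj
      rw [Finset.mem_filter] at hj
      have := hj.2
      simp only [hw, decide_eq_false_iff_not, not_not] at this
      exact this
    obtain ⟨i, hM⟩ := hs w hz
    have hd' : (p' + q') ∈ Qpq p' q' := by rw [mem_Qpq]; omega
    obtain ⟨hid, -⟩ := hM (p'+q') hd'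
    have hig : i < gfun p q k := by omega
    obtain ⟨z, hzZ, hz1, hz2, hz3⟩ := hZcov i hig
    have hx : (z - i) ∈ Qpq p' q' := by rw [mem_Qpq]; omega
    obtain ⟨-, hwt⟩ := hM (z - i) hx
    have hiz : i + (z - i) = z := by omega
    rw [hiz] at hwt
    simp only [hw, decide_eq_true_eq] at hwt
    exact hwt hzZ
  exact le_trans h1 (key _ hmem)
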